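/- Let a, s, t be rational numbers with 4at⁴ + s⁴ ≠ 0 and 2a²t⁸ + 10as⁴t⁴ − s⁸ ≠ 0, and set U = (at⁴ − 2s⁴)/(4at⁴ + s⁴). Then there exists a rational number V such that V² = −16at⁴U⁴ + 4at⁴U³ − 4s⁴U + s⁴. -/

import Mathlib

theorem stmt_5 (a s t : ℚ)
    (h2 : 4 * a * t ^ 4 + s ^ 4 ≠ 0)
    (h3 : 2 * a ^ 2 * t ^ 8 + 10 * a * s ^ 4 * t ^ 4 - s ^ 8 ≠ 0)
    (U : ℚ) (hU : U = (a * t ^ 4 - 2 * s ^ 4) / (4 * a * t ^ 4 + s ^ 4)) :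
    ∃ V : ℚ, V ^ 2 = -16 * a * t ^ 4 * U ^ 4 + 4 * a * t ^ 4 * U ^ 3 - 4 * s ^ 4 * U + s ^ 4 := by
  refine ⟨3 * s ^ 2 * (2 * a ^ 2 * t ^ 8 + 10 * a * s ^ 4 * t ^ 4 - s ^ 8) /
    (4 * a * t ^ 4 + s ^ 4) ^ 2, ?_⟩
  subst hU
  have h2' : a * t ^ 4 * 4 + s ^ 4 ≠ 0 := by contrapose! h2; linarith
  field_simp
  ring
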